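/- Let n ≥ 1 be odd and let A = (a_{i,j}) be the n×n matrix over Z_{2n²+2n} defined by a_{i,j} = i + (n+1)(j−1) when i ≡ j (mod 2) and a_{i,j} = n² + n − i − (n+1)(j−1) when i ≢ j (mod 2). Then for every j ∈ [1,n] the sum of the entries of column j equals (n+1)·(n² + (−1)^j(n+1−2j))/2 in Z_{2n²+2n}, and for every i ∈ [1,n] the sum of the entries of row i equals (n²+n)/2 + (−1)^i·((n³+1)/2 − i) in Z_{2n²+2n}. -/
import Mathlib

lemma alt1 (k : ℕ) : ∑ i ∈ Finset.Icc 1 (2*k+1), ((-1:ℤ))^i = -1 := by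
  induction k with
  | zero => decide
  | succ k ih =>
    rw [show 2*(k+1)+1 = (2*k+1)+1+1 by ring,
      Finset.sum_Icc_succ_top (by omega), Finset.sum_Icc_succ_top (by omega), ih,
      Even.neg_one_pow ⟨k+1, by ring⟩, Odd.neg_one_pow ⟨k+1, by ring⟩]
    ring

lemma alt2 (k : ℕ) : ∑ i ∈ Finset.Icc 1 (2*k+1), ((-1:ℤ))^i * (i:ℤ) = -((k:ℤ)+1) := by
  induction k with
  | zero => decide
  | succ k ih =>
    rw [show 2*(k+1)+1 = (2*k+1)+1+1 by ring,
      Finset.sum_Icc_succ_top (by omega), Finset.sum_Icc_succ_top (by omega), ih,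
      Even.neg_one_pow ⟨k+1, by ring⟩, Odd.neg_one_pow ⟨k+1, by ring⟩]
    push_cast
    ring

def gfun (k i j : ℕ) : ℤ :=
  (-1)^(i+j) * ((i:ℤ) + (2*(k:ℤ)+2)*((j:ℤ)-1) - (2*(k:ℤ)^2+3*k+1)) + (2*(k:ℤ)^2+3*k+1)

lemma colsum (k j : ℕ) : ∑ i ∈ Finset.Icc 1 (2*k+1), gfun k i j =
    (-1:ℤ)^j * (2*(k:ℤ)^2 + 4*k + 2 - (2*(k:ℤ)+2)*(j:ℤ))
      + (2*(k:ℤ)+1)*(2*(k:ℤ)^2+3*(k:ℤ)+1) := by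
  have step : ∀ i ∈ Finset.Icc 1 (2*k+1), gfun k i j =
      ((-1:ℤ)^i * (i:ℤ)) * (-1)^j
        + ((-1:ℤ)^i * ((-1)^j * ((2*(k:ℤ)+2)*((j:ℤ)-1) - (2*(k:ℤ)^2+3*k+1)))
        + (2*(k:ℤ)^2+3*k+1)) := by
    intro i _
    unfold gfun
    rw [pow_add]
    ring
  rw [Finset.sum_congr rfl step, Finset.sum_add_distrib, Finset.sum_add_distrib,
    ← Finset.sum_mul, ← Finset.sum_mul, Finset.sum_const, Nat.card_Icc, alt1, alt2]
  simp only [nsmul_eq_mul]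
  push_cast
  ring

lemma rowsum (k i : ℕ) : ∑ j ∈ Finset.Icc 1 (2*k+1), gfun k i j =
    (-1:ℤ)^i * ((k:ℤ) + 1 - (i:ℤ)) + (2*(k:ℤ)+1)*(2*(k:ℤ)^2+3*(k:ℤ)+1) := by
  have step : ∀ j ∈ Finset.Icc 1 (2*k+1), gfun k i j =
      ((-1:ℤ)^j * (j:ℤ)) * ((-1)^i * (2*(k:ℤ)+2))
        + ((-1:ℤ)^j * ((-1)^i * ((i:ℤ) - (2*(k:ℤ)+2) - (2*(k:ℤ)^2+3*k+1)))
        + (2*(k:ℤ)^2+3*k+1)) := by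
    intro j _
    unfold gfun
    rw [pow_add]
    ring
  rw [Finset.sum_congr rfl step, Finset.sum_add_distrib, Finset.sum_add_distrib,
    ← Finset.sum_mul, ← Finset.sum_mul, Finset.sum_const, Nat.card_Icc, alt1, alt2]
  simp only [nsmul_eq_mul]
  push_cast
  ring

theorem stmt10 (n : ℕ) (hn : 1 ≤ n) (hodd : Odd n)
    (A : ℕ → ℕ → ZMod (2 * n ^ 2 + 2 * n))
    (hA : ∀ i ∈ Finset.Icc 1 n, ∀ j ∈ Finset.Icc 1 n,
      (i % 2 = j % 2 →
        A i j = (((i : ℤ) + ((n : ℤ) + 1) * ((j : ℤ) - 1) : ℤ) : ZMod (2 * n ^ 2 + 2 * n))) ∧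
      (i % 2 ≠ j % 2 →
        A i j = (((n : ℤ) ^ 2 + n - i - ((n : ℤ) + 1) * ((j : ℤ) - 1) : ℤ)
          : ZMod (2 * n ^ 2 + 2 * n)))) :
    (∀ j ∈ Finset.Icc 1 n,
      (∑ i ∈ Finset.Icc 1 n, A i j) =
        (((((n : ℤ) + 1) * ((n : ℤ) ^ 2 + (-1) ^ j * ((n : ℤ) + 1 - 2 * j)) / 2) : ℤ)
          : ZMod (2 * n ^ 2 + 2 * n))) ∧
    (∀ i ∈ Finset.Icc 1 n,
      (∑ j ∈ Finset.Icc 1 n, A i j) =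
        (((((n : ℤ) ^ 2 + n) / 2 + (-1) ^ i * (((n : ℤ) ^ 3 + 1) / 2 - i)) : ℤ)
          : ZMod (2 * n ^ 2 + 2 * n))) := by
  obtain ⟨k, hk⟩ := hodd
  subst hk
  have hgA : ∀ i ∈ Finset.Icc 1 (2*k+1), ∀ j ∈ Finset.Icc 1 (2*k+1),
      A i j = ((gfun k i j : ℤ) : ZMod (2 * (2*k+1) ^ 2 + 2 * (2*k+1))) := by
    intro i hi j hj
    obtain ⟨h1, h2⟩ := hA i hi j hj
    rcases Nat.even_or_odd (i+j) with he | ho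
    · have hij : i % 2 = j % 2 := by
        have := (Nat.even_add).mp he
        simp only [Nat.even_iff] at this
        omega
      rw [h1 hij]
      congr 1
      unfold gfun
      rw [he.neg_one_pow]
      push_cast
      ring
    · have hij : i % 2 ≠ j % 2 := by
        have := (Nat.odd_add).mp ho
        simp only [Nat.even_iff, Nat.odd_iff] at this
        omega
      rw [h2 hij]
      congr 1
      unfold gfun
      rw [ho.neg_one_pow]
      push_cast
      ring
  have hN : ((2*k+1 : ℕ) : ℤ) = 2*(k:ℤ)+1 := by push_cast; ring
  constructor
  · intro j hj
    rw [Finset.sum_congr rfl (fun i hi => hgA i hi j hj), ← Int.cast_sum, colsum]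
    simp only [hN]
    rw [show ((2*(k:ℤ)+1)+1) * ((2*(k:ℤ)+1)^2 + (-1)^j * ((2*(k:ℤ)+1)+1-2*(j:ℤ)))
        = 2 * (((k:ℤ)+1) * ((2*(k:ℤ)+1)^2 + (-1)^j * ((2*(k:ℤ)+1)+1-2*(j:ℤ)))) by ring,
      Int.mul_ediv_cancel_left _ two_ne_zero]
    congr 1
    ring
  · intro i hi
    rw [Finset.sum_congr rfl (fun j hj => hgA i hi j hj), ← Int.cast_sum, rowsum]
    simp only [hN]
    rw [show (2*(k:ℤ)+1)^2 + (2*(k:ℤ)+1) = 2 * (2*(k:ℤ)^2+3*k+1) by ring,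
      show (2*(k:ℤ)+1)^3 + 1 = 2 * (4*(k:ℤ)^3+6*k^2+3*k+1) by ring,
      Int.mul_ediv_cancel_left _ two_ne_zero, Int.mul_ediv_cancel_left _ two_ne_zero]
    rcases Nat.even_or_odd i with he | ho
    · rw [he.neg_one_pow]
      congr 1
      ring
    · rw [ho.neg_one_pow]
      have key : (-1:ℤ) * ((k:ℤ) + 1 - (i:ℤ)) + (2*(k:ℤ)+1)*(2*(k:ℤ)^2+3*(k:ℤ)+1)
          = ((2*(k:ℤ)^2+3*k+1) + (-1) * ((4*(k:ℤ)^3+6*k^2+3*k+1) - (i:ℤ)))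
            + (k:ℤ) * ((2 * (2*k+1) ^ 2 + 2 * (2*k+1) : ℕ) : ℤ) := by
        push_cast
        ring
      rw [key]
      have hm : (((2 * (2*k+1) ^ 2 + 2 * (2*k+1) : ℕ) : ℤ)
          : ZMod (2 * (2*k+1) ^ 2 + 2 * (2*k+1))) = 0 := by
        rw [Int.cast_natCast, ZMod.natCast_self]
      rw [Int.cast_add, Int.cast_mul, hm, mul_zero, add_zero]
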